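/- Let S be a finite set with |S| = m ≥ 2, let p be a probability distribution on S, let n ≥ 1, and let X₁,…,Xₙ be independent random variables each distributed according to p. Let p̂ₙ(s) := (1/n)·#{i ≤ n : X_i = s} be the empirical distribution. Then for every δ ∈ (0,1), the probability that ∑_{s∈S} |p̂ₙ(s) − p(s)| ≥ √(2·log(2^m/δ)/n) is at most δ. -/

import Mathlib

open MeasureTheory ProbabilityTheory Finset

section Aux
open Real


lemma hoeff_bernoulli (q : ℝ) (hq0 : 0 ≤ q) (hq1 : q ≤ 1) (t : ℝ) :
    1 - q + q * exp t ≤ exp (q * t + t ^ 2 / 8) := by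
  set D : ℝ → ℝ := fun u => 1 - q + q * exp u with hDdef
  have hDpos : ∀ u, 0 < D u := by
    intro u
    rcases hq0.eq_or_lt with h | h
    · simp [hDdef, ← h]
    · have h2 : 0 < q * exp u := mul_pos h (exp_pos u)
      show 0 < 1 - q + q * exp u
      nlinarith
  set h : ℝ → ℝ := fun u => q * u + u ^ 2 / 8 - log (D u) with hhdef
  set h' : ℝ → ℝ := fun u => q + u / 4 - q * exp u / D u with hh'def
  have hD : ∀ u, HasDerivAt D (q * exp u) u := by
    intro u
    exact ((hasDerivAt_exp u).const_mul q).const_add (1 - q)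
  have hd1 : ∀ u, HasDerivAt h (h' u) u := by
    intro u
    have hlog : HasDerivAt (fun v => log (D v)) (q * exp u / D u) u :=
      (hD u).log (hDpos u).ne'
    have h1 : HasDerivAt (fun v => q * v + v ^ 2 / 8) (q + u / 4) u := by
      have := ((hasDerivAt_id u).const_mul q).add
        (((hasDerivAt_pow 2 u)).div_const 8)
      refine this.congr_deriv ?_
      ring
    exact h1.sub hlog
  have hd2 : ∀ u, HasDerivAt h' (1 / 4 - q * exp u * (1 - q) / (D u) ^ 2) u := by
    intro u
    have hnum : HasDerivAt (fun v => q * exp v) (q * exp u) u :=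
      (hasDerivAt_exp u).const_mul q
    have hdiv : HasDerivAt (fun v => q * exp v / D v)
        ((q * exp u * D u - q * exp u * (q * exp u)) / (D u) ^ 2) u :=
      hnum.div (hD u) (hDpos u).ne'
    have h1 : HasDerivAt (fun v => q + v / 4) (1 / 4) u := by
      simpa using ((hasDerivAt_id u).div_const 4).const_add q
    have := h1.sub hdiv
    refine this.congr_deriv ?_
    have : q * exp u * D u - q * exp u * (q * exp u) = q * exp u * (1 - q) := by
      simp only [hDdef]; ring
    rw [this]
  have hd2nonneg : ∀ u, 0 ≤ 1 / 4 - q * exp u * (1 - q) / (D u) ^ 2 := by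
    intro u
    have hDu := hDpos u
    have h4 : 4 * (q * exp u * (1 - q)) ≤ (D u) ^ 2 := by
      have : (0:ℝ) ≤ ((1 - q) - q * exp u) ^ 2 := sq_nonneg _
      simp only [hDdef] at *
      nlinarith
    have hsq : (0:ℝ) < (D u) ^ 2 := by positivity
    rw [sub_nonneg, div_le_iff₀ hsq]
    have hE : D u ^ 2 = (1 - q + q * exp u) ^ 2 := rfl
    rw [hE] at h4 ⊢
    nlinarith [h4]
  have hh'0 : h' 0 = 0 := by
    simp only [hh'def, hDdef, exp_zero, mul_one]
    field_simp
    ring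
  have hh0 : h 0 = 0 := by
    simp [hhdef, hDdef]
  have hh'mono : Monotone h' := by
    apply monotone_of_deriv_nonneg
    · exact fun u => (hd2 u).differentiableAt
    · intro u
      rw [(hd2 u).deriv]
      exact hd2nonneg u
  -- h is nonneg
  have hmain : ∀ u, 0 ≤ h u := by
    intro u
    rcases le_or_gt 0 u with hu | hu
    · have hmonoIci : MonotoneOn h (Set.Ici 0) := by
        apply monotoneOn_of_deriv_nonneg (convex_Ici 0)
        · exact Continuous.continuousOn (by
            fun_prop (disch := intro u; exact (hDpos u).ne'))
        · intro x hx
          exact (hd1 x).differentiableAt.differentiableWithinAt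
        · intro x hx
          rw [(hd1 x).deriv]
          have : h' 0 ≤ h' x := hh'mono (le_of_lt (by simpa using hx))
          rw [hh'0] at this; exact this
      have := hmonoIci (Set.self_mem_Ici) (by exact hu) hu
      rwa [hh0] at this
    · have hantIic : AntitoneOn h (Set.Iic 0) := by
        apply antitoneOn_of_deriv_nonpos (convex_Iic 0)
        · exact Continuous.continuousOn (by
            fun_prop (disch := intro u; exact (hDpos u).ne'))
        · intro x hx
          exact (hd1 x).differentiableAt.differentiableWithinAt
        · intro x hx
          rw [(hd1 x).deriv]
          have : h' x ≤ h' 0 := hh'mono (le_of_lt (by simpa using hx))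
          rw [hh'0] at this; exact this
      have := hantIic (by exact hu.le) Set.self_mem_Iic hu.le
      rwa [hh0] at this
  have := hmain t
  have hlogD : log (D t) ≤ q * t + t ^ 2 / 8 := by
    simp only [hhdef] at this; linarith
  calc 1 - q + q * exp t = D t := rfl
    _ = exp (log (D t)) := (exp_log (hDpos t)).symm
    _ ≤ exp (q * t + t ^ 2 / 8) := exp_le_exp.mpr hlogD

lemma chernoff_indicator {Ω : Type*} [MeasurableSpace Ω] (Pr : Measure Ω)
    [IsProbabilityMeasure Pr]
    {S : Type*} [Fintype S] [DecidableEq S] [MeasurableSpace S] [MeasurableSingletonClass S]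
    (n : ℕ) (X : Fin n → Ω → S) (hmeas : ∀ i, Measurable (X i))
    (hindep : iIndepFun X Pr)
    (A : Finset S) (q : ℝ) (hq0 : 0 ≤ q) (hq1 : q ≤ 1)
    (hq : ∀ i, Pr (X i ⁻¹' (↑A : Set S)) = ENNReal.ofReal q)
    (a : ℝ) (ha : 0 ≤ a) :
    Pr {ω | (n : ℝ) * q + n * a ≤ ∑ i, (if X i ω ∈ A then (1:ℝ) else 0)} ≤
      ENNReal.ofReal (exp (-2 * n * a ^ 2)) := by
  classical
  set g : S → ℝ := fun s => if s ∈ A then (1:ℝ) else 0 with hgdef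
  set Y : Fin n → Ω → ℝ := fun i => g ∘ X i with hYdef
  have hgmeas : Measurable g := measurable_of_countable g
  have hYmeas : ∀ i, Measurable (Y i) := fun i => hgmeas.comp (hmeas i)
  have hYindep : iIndepFun Y Pr :=
    hindep.comp (fun _ => g) (fun _ => hgmeas)
  have hAmeas : MeasurableSet (↑A : Set S) := (Set.to_countable _).measurableSet
  have hBmeas : ∀ i, MeasurableSet (X i ⁻¹' (↑A : Set S)) := fun i => (hmeas i) hAmeas
  set t : ℝ := 4 * a with htdef
  have ht : 0 ≤ t := by positivity
  -- decomposition of exp (t * Y i)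
  have hdecomp : ∀ i, (fun ω => exp (t * Y i ω)) =
      fun ω => (X i ⁻¹' (↑A : Set S)).indicator (fun _ => exp t) ω +
        (X i ⁻¹' (↑A : Set S))ᶜ.indicator (fun _ => (1:ℝ)) ω := by
    intro i
    funext ω
    by_cases h : X i ω ∈ A <;>
      simp [hYdef, hgdef, g, Set.indicator, h]
  have hint : ∀ i, Integrable (fun ω => exp (t * Y i ω)) Pr := by
    intro i
    rw [hdecomp i]
    exact (((integrable_const _).indicator (hBmeas i)).add
      ((integrable_const _).indicator (hBmeas i).compl))
  have hcompl : ∀ i, Pr (X i ⁻¹' (↑A : Set S))ᶜ = ENNReal.ofReal (1 - q) := by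
    intro i
    rw [measure_compl (hBmeas i) (measure_ne_top _ _), hq i, measure_univ,
      ENNReal.ofReal_sub 1 hq0, ENNReal.ofReal_one]
  have hmgf : ∀ i, mgf (Y i) Pr t = q * exp t + (1 - q) := by
    intro i
    rw [mgf]
    rw [hdecomp i]
    rw [integral_add ((integrable_const _).indicator (hBmeas i))
      ((integrable_const _).indicator (hBmeas i).compl)]
    rw [integral_indicator_const _ (hBmeas i), integral_indicator_const _ (hBmeas i).compl,
      measureReal_def, measureReal_def, hq i, hcompl i, ENNReal.toReal_ofReal hq0, ENNReal.toReal_ofReal (by linarith)]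
    simp [mul_comm]
  have hmgfsum : mgf (∑ i, Y i) Pr t = (q * exp t + (1 - q)) ^ n := by
    rw [hYindep.mgf_sum hYmeas]
    simp [hmgf]
  have hintsum : Integrable (fun ω => exp (t * (∑ i, Y i) ω)) Pr :=
    hYindep.integrable_exp_mul_sum hYmeas (fun i _ => hint i)
  have hcher := measure_ge_le_exp_mul_mgf (μ := Pr) (X := ∑ i, Y i)
    ((n : ℝ) * q + n * a) ht hintsum
  rw [hmgfsum] at hcher
  have hbound : exp (-t * ((n:ℝ) * q + n * a)) * (q * exp t + (1 - q)) ^ n ≤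
      exp (-2 * n * a ^ 2) := by
    have h1 : q * exp t + (1 - q) ≤ exp (q * t + t ^ 2 / 8) := by
      have := hoeff_bernoulli q hq0 hq1 t
      linarith
    have h0 : (0:ℝ) ≤ q * exp t + (1 - q) := by
      have := exp_pos t
      nlinarith
    have h2 : (q * exp t + (1 - q)) ^ n ≤ exp (q * t + t ^ 2 / 8) ^ n :=
      pow_le_pow_left₀ h0 h1 n
    have h3 : exp (q * t + t ^ 2 / 8) ^ n = exp (n * (q * t + t ^ 2 / 8)) := by
      rw [← exp_nat_mul]
    calc exp (-t * ((n:ℝ) * q + n * a)) * (q * exp t + (1 - q)) ^ n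
        ≤ exp (-t * ((n:ℝ) * q + n * a)) * exp (n * (q * t + t ^ 2 / 8)) := by
          rw [← h3]; exact mul_le_mul_of_nonneg_left h2 (exp_pos _).le
      _ = exp (-t * ((n:ℝ) * q + n * a) + n * (q * t + t ^ 2 / 8)) := (exp_add _ _).symm
      _ = exp (-2 * n * a ^ 2) := by rw [htdef]; ring_nf
  -- assemble
  have hsetEq : {ω | (n : ℝ) * q + n * a ≤ ∑ i, (if X i ω ∈ A then (1:ℝ) else 0)} =
      {ω | (n : ℝ) * q + n * a ≤ (∑ i, Y i) ω} := by
    congr 1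
    funext ω
    simp [hYdef, hgdef, g, Finset.sum_apply]
  rw [hsetEq]
  have := hcher.trans hbound
  calc Pr {ω | (n : ℝ) * q + n * a ≤ (∑ i, Y i) ω}
      = ENNReal.ofReal (Pr {ω | (n : ℝ) * q + n * a ≤ (∑ i, Y i) ω}).toReal :=
        (ENNReal.ofReal_toReal (measure_ne_top _ _)).symm
    _ ≤ ENNReal.ofReal (exp (-2 * n * a ^ 2)) := ENNReal.ofReal_le_ofReal this

end Aux

/-- Weissman-type L1 deviation bound for the empirical distribution of `n` i.i.d. samples
from a distribution `p` on a finite set of size `m`: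
`‖p̂ₙ − p‖₁ ≥ √(2·log(2^m/δ)/n)` with probability at most `δ`. -/
theorem l1_deviation_empirical_distribution
    {Ω : Type*} [MeasurableSpace Ω] (Pr : Measure Ω) [IsProbabilityMeasure Pr]
    {S : Type*} [Fintype S] [DecidableEq S]
    [MeasurableSpace S] [MeasurableSingletonClass S]
    (m : ℕ) (hm : m = Fintype.card S) (hm2 : 2 ≤ m)
    (p : S → ℝ) (hp0 : ∀ s, 0 ≤ p s) (hp1 : ∑ s, p s = 1)
    (n : ℕ) (hn : 1 ≤ n) (X : Fin n → Ω → S)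
    (hmeas : ∀ i, Measurable (X i))
    (hindep : iIndepFun X Pr)
    (hdist : ∀ i s, Pr (X i ⁻¹' {s}) = ENNReal.ofReal (p s))
    (δ : ℝ) (hδ : δ ∈ Set.Ioo (0 : ℝ) 1) :
    Pr {ω | Real.sqrt (2 * Real.log (2 ^ m / δ) / n) ≤
        ∑ s : S, |((Finset.univ.filter (fun i => X i ω = s)).card : ℝ) / n - p s|} ≤
      ENNReal.ofReal δ := by
  classical
  obtain ⟨hδ0, hδ1⟩ := hδ
  have hnpos : (0:ℝ) < n := by exact_mod_cast hn
  have h2m1 : (1:ℝ) ≤ 2 ^ m := one_le_pow₀ one_le_two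
  have hratpos : (0:ℝ) < 2 ^ m / δ := by positivity
  have hrat1 : (1:ℝ) ≤ 2 ^ m / δ := by
    rw [le_div_iff₀ hδ0]; linarith
  have hlog0 : 0 ≤ Real.log (2 ^ m / δ) := Real.log_nonneg hrat1
  set ε : ℝ := Real.sqrt (2 * Real.log (2 ^ m / δ) / n) with hεdef
  set a : ℝ := ε / 2 with hadef
  have ha0 : 0 ≤ a := by positivity
  -- probability of each finset
  have hqA : ∀ (A : Finset S) (i : Fin n),
      Pr (X i ⁻¹' (↑A : Set S)) = ENNReal.ofReal (∑ s ∈ A, p s) := by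
    intro A i
    have hU : X i ⁻¹' (↑A : Set S) = ⋃ s ∈ A, X i ⁻¹' {s} := by
      ext ω; simp
    have hcg : ∑ s ∈ A, Pr (X i ⁻¹' {s}) = ∑ s ∈ A, ENNReal.ofReal (p s) :=
      Finset.sum_congr rfl fun s _ => hdist i s
    rw [hU, measure_biUnion_finset]
    · rw [hcg, ← ENNReal.ofReal_sum_of_nonneg (fun s _ => hp0 s)]
    · intro s hs u hu hsu
      exact Set.disjoint_iff_forall_ne.mpr (by
        rintro x hx y hy rfl
        exact hsu (by simp at hx hy; rw [← hx, ← hy]))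
    · exact fun s _ => (hmeas i) (measurableSet_singleton s)
  have hq0 : ∀ A : Finset S, 0 ≤ ∑ s ∈ A, p s := fun A => Finset.sum_nonneg fun s _ => hp0 s
  have hq1 : ∀ A : Finset S, ∑ s ∈ A, p s ≤ 1 := by
    intro A
    rw [← hp1]
    exact Finset.sum_le_univ_sum_of_nonneg hp0
  -- the union bound sets
  set EA : Finset S → Set Ω := fun A =>
    {ω | (n : ℝ) * (∑ s ∈ A, p s) + n * a ≤ ∑ i, (if X i ω ∈ A then (1:ℝ) else 0)} with hEAdef
  -- inclusion
  have hincl : {ω | ε ≤ ∑ s : S, |((Finset.univ.filter (fun i => X i ω = s)).card : ℝ) / n - p s|}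
      ⊆ ⋃ A : Finset S, EA A := by
    intro ω hω
    simp only [Set.mem_setOf_eq] at hω
    set c : S → ℝ := fun s => ((Finset.univ.filter (fun i => X i ω = s)).card : ℝ) with hcdef
    set A : Finset S := univ.filter (fun s => p s ≤ c s / n) with hAdef
    -- count sums to n
    have hsumc : ∑ s : S, c s = n := by
      simp only [hcdef]
      rw [← Nat.cast_sum]
      congr 1
      exact (Finset.card_eq_sum_card_fiberwise (f := fun i => X i ω)
        (fun i _ => Finset.mem_univ _)).symm.trans (by simp)
    -- indicator sum equals count sum
    have hswap : ∀ B : Finset S, ∑ i, (if X i ω ∈ B then (1:ℝ) else 0) = ∑ s ∈ B, c s := by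
      intro B
      have : ∀ i : Fin n, (if X i ω ∈ B then (1:ℝ) else 0) =
          ∑ s ∈ B, (if X i ω = s then (1:ℝ) else 0) := by
        intro i
        rw [Finset.sum_ite_eq B (X i ω) (fun _ => (1:ℝ))]
      simp_rw [this]
      rw [Finset.sum_comm]
      refine Finset.sum_congr rfl fun s _ => ?_
      simp [hcdef, Finset.sum_boole]
    -- L1 identity
    have hd0 : ∑ s : S, (c s / n - p s) = 0 := by
      rw [Finset.sum_sub_distrib, hp1, ← Finset.sum_div, hsumc]
      field_simp
      ring
    have habs : ∑ s : S, |c s / n - p s| = 2 * ∑ s ∈ A, (c s / n - p s) := by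
      rw [← Finset.sum_filter_add_sum_filter_not univ (fun s => p s ≤ c s / n)
        (fun s => |c s / n - p s|)]
      rw [← Finset.sum_filter_add_sum_filter_not univ (fun s => p s ≤ c s / n)
        (fun s => c s / n - p s)] at hd0
      have e1 : ∑ s ∈ univ.filter (fun s => p s ≤ c s / n), |c s / n - p s| =
          ∑ s ∈ univ.filter (fun s => p s ≤ c s / n), (c s / n - p s) :=
        Finset.sum_congr rfl fun s hs => abs_of_nonneg (by
          simp only [Finset.mem_filter] at hs; linarith [hs.2])
      have e2 : ∑ s ∈ univ.filter (fun s => ¬ p s ≤ c s / n), |c s / n - p s| =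
          - ∑ s ∈ univ.filter (fun s => ¬ p s ≤ c s / n), (c s / n - p s) := by
        rw [← Finset.sum_neg_distrib]
        exact Finset.sum_congr rfl fun s hs => abs_of_nonpos (by
          simp only [Finset.mem_filter] at hs; push_neg at hs; linarith [hs.2])
      rw [e1, e2]
      have : ∑ s ∈ univ.filter (fun s => ¬ p s ≤ c s / n), (c s / n - p s) =
          - ∑ s ∈ univ.filter (fun s => p s ≤ c s / n), (c s / n - p s) := by linarith
      rw [this]
      ring
    -- conclude membership
    refine Set.mem_iUnion.mpr ⟨A, ?_⟩
    simp only [hEAdef, Set.mem_setOf_eq]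
    rw [hswap A]
    have h1 : ε ≤ 2 * ∑ s ∈ A, (c s / n - p s) := by rw [← habs]; exact hω
    have h2 : a ≤ (∑ s ∈ A, c s) / n - ∑ s ∈ A, p s := by
      rw [hadef]
      rw [Finset.sum_sub_distrib, ← Finset.sum_div] at h1
      linarith
    have := mul_le_mul_of_nonneg_left h2 hnpos.le
    rw [mul_sub, mul_div_cancel₀ _ hnpos.ne'] at this
    linarith
  -- union bound
  refine le_trans (measure_mono hincl) ?_
  refine le_trans (measure_iUnion_le _) ?_
  have hbound : ∀ A : Finset S, Pr (EA A) ≤ ENNReal.ofReal (Real.exp (-2 * n * a ^ 2)) := by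
    intro A
    exact chernoff_indicator Pr n X hmeas hindep A _ (hq0 A) (hq1 A) (hqA A) a ha0
  calc ∑' A : Finset S, Pr (EA A) ≤ ∑' _A : Finset S, ENNReal.ofReal (Real.exp (-2 * n * a ^ 2)) :=
        ENNReal.tsum_le_tsum hbound
    _ = (Fintype.card (Finset S)) * ENNReal.ofReal (Real.exp (-2 * n * a ^ 2)) := by
        rw [tsum_fintype, Finset.sum_const, nsmul_eq_mul, Finset.card_univ]
    _ ≤ ENNReal.ofReal δ := by
        have hexp : Real.exp (-2 * n * a ^ 2) = δ / 2 ^ m := by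
          have hsq : ε ^ 2 = 2 * Real.log (2 ^ m / δ) / n := by
            rw [hεdef, Real.sq_sqrt (by positivity)]
          have h1 : -2 * (n:ℝ) * a ^ 2 = - Real.log (2 ^ m / δ) := by
            rw [hadef, div_pow]
            rw [hsq]
            field_simp
          rw [h1, Real.exp_neg, Real.exp_log hratpos]
          rw [inv_div]
        rw [hexp]
        have hcard : Fintype.card (Finset S) = 2 ^ m := by rw [Fintype.card_finset, hm]
        rw [hcard, ← ENNReal.ofReal_natCast (2 ^ m),
          ← ENNReal.ofReal_mul (by positivity)]
        apply ENNReal.ofReal_le_ofReal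
        push_cast
        have h2ne : (2:ℝ) ^ m ≠ 0 := by positivity
        rw [mul_div_cancel₀ _ h2ne]
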